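/- Let 0 ≤ α_l < α_h ≤ 1 and q ∈ [0,1]. For every r ∈ ℝ^m: δ(q)·Q_h(r) > (1-δ(q))·Q_l(r) if and only if q·P(r) > (1-q)·N(r); δ(q)·Q_h(r) < (1-δ(q))·Q_l(r) if and only if q·P(r) < (1-q)·N(r); and δ(q)·Q_h(r) = (1-δ(q))·Q_l(r) if and only if q·P(r) = (1-q)·N(r). Hence the optimal classification domains D_p*(q) = {r : q·P(r) > (1-q)·N(r)}, D_n*(q) = {r : q·P(r) < (1-q)·N(r)}, and boundary set B*(q) = {r : q·P(r) = (1-q)·N(r)} are recovered exactly from the impure densities via δ(q). -/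

import Mathlib

open Set

/-- For `0 ≤ α_l < α_h ≤ 1`, `q ∈ [0,1]`, and every `r`:
`δ(q)·Q_h(r) > (1-δ(q))·Q_l(r) ↔ q·P(r) > (1-q)·N(r)`,
`δ(q)·Q_h(r) < (1-δ(q))·Q_l(r) ↔ q·P(r) < (1-q)·N(r)`, and
`δ(q)·Q_h(r) = (1-δ(q))·Q_l(r) ↔ q·P(r) = (1-q)·N(r)`. Hence the optimal classification
domains `D_p*(q)`, `D_n*(q)` and boundary set `B*(q)` are recovered exactly from the impure
densities via `δ(q)`. -/
theorem stmt_6 {m : ℕ} (N P : (Fin m → ℝ) → ℝ)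
    (hNmeas : Measurable N) (hPmeas : Measurable P)
    (hNnonneg : ∀ r, 0 ≤ N r) (hPnonneg : ∀ r, 0 ≤ P r)
    (hNint : MeasureTheory.integral MeasureTheory.volume N = 1)
    (hPint : MeasureTheory.integral MeasureTheory.volume P = 1)
    (αl αh : ℝ) (hαl : 0 ≤ αl) (hlh : αl < αh) (hαh : αh ≤ 1)
    (Ql Qh : (Fin m → ℝ) → ℝ)
    (hQl : ∀ r, Ql r = αl * P r + (1 - αl) * N r)
    (hQh : ∀ r, Qh r = αh * P r + (1 - αh) * N r)
    (δ : ℝ → ℝ)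
    (hδ : ∀ q, δ q = (q * (1 - αl) + (1 - q) * αl)
      / ((αl + αh) * (1 - q) + (2 - αl - αh) * q))
    (q : ℝ) (hq : q ∈ Set.Icc (0 : ℝ) 1) :
    (∀ r, (δ q * Qh r > (1 - δ q) * Ql r ↔ q * P r > (1 - q) * N r)
        ∧ (δ q * Qh r < (1 - δ q) * Ql r ↔ q * P r < (1 - q) * N r)
        ∧ (δ q * Qh r = (1 - δ q) * Ql r ↔ q * P r = (1 - q) * N r))
    ∧ {r | δ q * Qh r > (1 - δ q) * Ql r} = {r | q * P r > (1 - q) * N r}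
    ∧ {r | δ q * Qh r < (1 - δ q) * Ql r} = {r | q * P r < (1 - q) * N r}
    ∧ {r | δ q * Qh r = (1 - δ q) * Ql r} = {r | q * P r = (1 - q) * N r} := by
  obtain ⟨hq0, hq1⟩ := hq
  have hD : 0 < (αl + αh) * (1 - q) + (2 - αl - αh) * q := by nlinarith
  have hc : 0 < (αh - αl) / ((αl + αh) * (1 - q) + (2 - αl - αh) * q) :=
    div_pos (by linarith) hD
  have key : ∀ r, δ q * Qh r - (1 - δ q) * Ql r =
      (αh - αl) / ((αl + αh) * (1 - q) + (2 - αl - αh) * q)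
        * (q * P r - (1 - q) * N r) := by
    intro r
    rw [hδ, hQl, hQh]
    have hD' := hD.ne'
    rw [div_mul_eq_mul_div, div_mul_eq_mul_div, one_sub_div hD', div_mul_eq_mul_div, ← sub_div]
    congr 1
    ring
  have main : ∀ r, (δ q * Qh r > (1 - δ q) * Ql r ↔ q * P r > (1 - q) * N r)
      ∧ (δ q * Qh r < (1 - δ q) * Ql r ↔ q * P r < (1 - q) * N r)
      ∧ (δ q * Qh r = (1 - δ q) * Ql r ↔ q * P r = (1 - q) * N r) := by
    intro r
    have h := key r
    refine ⟨⟨fun h1 => ?_, fun h1 => ?_⟩, ⟨fun h1 => ?_, fun h1 => ?_⟩,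
      ⟨fun h1 => ?_, fun h1 => ?_⟩⟩
    · nlinarith [mul_pos hc (show (0:ℝ) < q * P r - (1 - q) * N r by nlinarith)]
    · nlinarith [mul_pos hc (show (0:ℝ) < q * P r - (1 - q) * N r by nlinarith)]
    · nlinarith [mul_pos hc (show (0:ℝ) < (1 - q) * N r - q * P r by nlinarith)]
    · nlinarith [mul_pos hc (show (0:ℝ) < (1 - q) * N r - q * P r by nlinarith)]
    · have h2 : (αh - αl) / ((αl + αh) * (1 - q) + (2 - αl - αh) * q)
          * (q * P r - (1 - q) * N r) = 0 := by linarith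
      rcases mul_eq_zero.mp h2 with h3 | h3
      · exact absurd h3 (ne_of_gt hc)
      · linarith
    · nlinarith
  exact ⟨main, Set.ext fun r => (main r).1, Set.ext fun r => (main r).2.1,
    Set.ext fun r => (main r).2.2⟩
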